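/- For the metric space M described in the context (Example 5.2 of the paper), the space Lip_0(M) has the local diameter 2 property: every slice of the closed unit ball of Lip_0(M) has diameter 2. -/

import Mathlib

open scoped ENNReal

/-- The set `M̃ = {(x,y) : x ≠ y}` as a subtype. -/
def Mt (M : Type*) : Type _ := {p : M × M // p.1 ≠ p.2}

variable {M : Type*} [MetricSpace M]

/-- `ℓ∞(M̃)`. -/
noncomputable abbrev ellInfty (M : Type*) : Type _ := ↥(lp (fun _ : Mt M => ℝ) ∞)

/-- A bounded linear functional on `ℓ∞(M̃)` is positive if it is nonnegative on
nonnegative functions. -/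
def IsPositive {M : Type*} (Λ : ellInfty M →L[ℝ] ℝ) : Prop :=
  ∀ h : ellInfty M, (∀ p : Mt M, 0 ≤ h p) → 0 ≤ Λ h

/-- The indicator function of `A ⊆ M̃` as an element of `ℓ∞(M̃)`. -/
noncomputable def indicLp {M : Type*} (A : Set (Mt M)) : ellInfty M :=
  ⟨A.indicator 1, memℓp_infty (by
    refine ⟨1, ?_⟩
    rintro r ⟨p, rfl⟩
    by_cases hp : p ∈ A <;>
      simp [Set.indicator_apply, hp])⟩

/-- The image of `Lip₀(M)` in `ℓ∞(M̃)` under the de Leeuw embedding `Φ`;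
`Lip₀(M)` itself is identified with this submodule, carrying the induced
(Lipschitz) norm, and `Φ` is then the inclusion `(LipO M base).subtypeL`. -/
noncomputable def LipO (M : Type*) [MetricSpace M] (base : M) :
    Submodule ℝ (ellInfty M) where
  carrier := {g | ∃ f : M → ℝ, f base = 0 ∧
    ∀ p : Mt M, g p = (f p.1.1 - f p.1.2) / dist p.1.1 p.1.2}
  add_mem' := by
    rintro g₁ g₂ ⟨f₁, hf₁, h₁⟩ ⟨f₂, hf₂, h₂⟩
    refine ⟨f₁ + f₂, by simp [hf₁, hf₂], fun p => ?_⟩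
    have : (⇑(g₁ + g₂) : Mt M → ℝ) = ⇑g₁ + ⇑g₂ := lp.coeFn_add g₁ g₂
    rw [this]
    simp only [Pi.add_apply, h₁ p, h₂ p]
    ring
  zero_mem' := by
    refine ⟨0, rfl, fun p => ?_⟩
    have : (⇑(0 : ellInfty M) : Mt M → ℝ) = 0 := lp.coeFn_zero _ _
    simp [this]
  smul_mem' := by
    rintro c g ⟨f, hf, h⟩
    refine ⟨c • f, by simp [hf], fun p => ?_⟩
    have : (⇑(c • g) : Mt M → ℝ) = c • ⇑g := lp.coeFn_smul c g
    rw [this]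
    simp only [Pi.smul_apply, smul_eq_mul, h p]
    ring

open Classical in
/-- Evaluation of (the function represented by) `g ∈ Lip₀(M)` at `x`. -/
noncomputable def evalAux (base x : M) (g : ↥(LipO M base)) : ℝ :=
  if h : x = base then 0
  else ((g : ellInfty M) : Mt M → ℝ) ⟨(x, base), h⟩ * dist x base

/-- The evaluation functional `δ_x : Lip₀(M) → ℝ`, `δ_x(f) = f(x)`
(recovering `f` from its de Leeuw transform). -/
noncomputable def deltaF (base x : M) : ↥(LipO M base) →L[ℝ] ℝ :=
  LinearMap.mkContinuous
    { toFun := evalAux base x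
      map_add' := fun g₁ g₂ => by
        unfold evalAux
        split_ifs with h
        · simp
        · simp only [Submodule.coe_add, lp.coeFn_add, Pi.add_apply]
          erw [Pi.add_apply]
          ring
      map_smul' := fun c g => by
        unfold evalAux
        split_ifs with h
        · simp
        · simp only [Submodule.coe_smul, lp.coeFn_smul, Pi.smul_apply,
            smul_eq_mul, RingHom.id_apply]
          erw [Pi.smul_apply, smul_eq_mul]
          ring }
    (dist x base)
    (by
      intro g
      simp only [LinearMap.coe_mk, AddHom.coe_mk]
      unfold evalAux
      split_ifs with h
      · subst h
        rw [norm_zero, dist_self, zero_mul]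
      · have h1 : ‖((g : ellInfty M) : Mt M → ℝ) ⟨(x, base), h⟩‖ ≤ ‖(g : ellInfty M)‖ :=
          lp.norm_apply_le_norm ENNReal.top_ne_zero (g : ellInfty M) ⟨(x, base), h⟩
        have h2 : ‖(g : ellInfty M)‖ = ‖g‖ := rfl
        calc ‖((g : ellInfty M) : Mt M → ℝ) ⟨(x, base), h⟩ * dist x base‖
            = ‖((g : ellInfty M) : Mt M → ℝ) ⟨(x, base), h⟩‖ * dist x base := by
              rw [norm_mul, Real.norm_eq_abs (dist x base), abs_of_nonneg dist_nonneg]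
          _ ≤ ‖g‖ * dist x base := by
              exact mul_le_mul_of_nonneg_right (h2 ▸ h1) dist_nonneg
          _ = dist x base * ‖g‖ := mul_comm _ _)

/-- The Lipschitz-free space `F(M)`: the closed linear span of the evaluation
functionals inside the dual of `Lip₀(M)`. -/
noncomputable def FreeSpan (M : Type*) [MetricSpace M] (base : M) :
    Submodule ℝ (↥(LipO M base) →L[ℝ] ℝ) :=
  Submodule.span ℝ (Set.range (deltaF base))

/-- The Lipschitz-free space `F(M)`: the closed linear span of the evaluation
functionals inside the dual of `Lip₀(M)`. -/
noncomputable def FreeSp (M : Type*) [MetricSpace M] (base : M) :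
    Set (↥(LipO M base) →L[ℝ] ℝ) :=
  closure (FreeSpan M base : Set (↥(LipO M base) →L[ℝ] ℝ))

/-- The weak-star topology `σ(Lip₀(M), F(M))` on `Lip₀(M)`. -/
noncomputable def wstar (M : Type*) [MetricSpace M] (base : M) :
    TopologicalSpace ↥(LipO M base) :=
  TopologicalSpace.induced
    (fun g => fun μ : FreeSp M base => (μ : ↥(LipO M base) →L[ℝ] ℝ) g)
    inferInstance

variable {M : Type*} [MetricSpace M]

/-- The de Leeuw quotient `f(m_{x,y}) = (f x - f y)/d(x,y)`. -/
noncomputable def mQ (f : M → ℝ) (p : Mt M) : ℝ :=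
  (f p.1.1 - f p.1.2) / dist p.1.1 p.1.2

/-- `A ⊆ M̃` is `γ`-cyclically monotonic. -/
def GammaCM (γ : ℝ) (A : Set (Mt M)) : Prop :=
  ∀ (n : ℕ) (p : Fin (n + 1) → Mt M), (∀ i, p i ∈ A) →
    0 ≤ ∑ i : Fin (n + 1),
      min (dist (p i).1.1 (p (i + 1)).1.2 - γ * dist (p i).1.1 (p i).1.2)
          (dist (p i).1.2 (p (i + 1)).1.2)

/-- `A ⊆ M̃` is cyclically monotonic. -/
def CyclMono (A : Set (Mt M)) : Prop :=
  ∀ (n : ℕ) (p : Fin (n + 1) → Mt M), (∀ i, p i ∈ A) →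
    ∑ i : Fin (n + 1), dist (p i).1.1 (p i).1.2 ≤
      ∑ i : Fin (n + 1), dist (p i).1.1 (p (i + 1)).1.2

/-- `π(A)`. -/
def piA (A : Set (Mt M)) : Set M := {z | ∃ p ∈ A, p.1.1 = z ∨ p.1.2 = z}

/-- The pair `(u,v)` as an element of `M̃`. -/
def pr {M : Type*} (u v : M) (h : u ≠ v) : Mt M := ⟨(u, v), h⟩

/-- The underlying set of the metric space of Example 5.2:
points `x_i, y_i, u_i^j, v_i^j` for `i ∈ {1,2,3}` (coded by `Fin 3`)
and `j ∈ ℕ`. -/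
inductive ExPt : Type
  | x : Fin 3 → ExPt
  | y : Fin 3 → ExPt
  | u : Fin 3 → ℕ → ExPt
  | v : Fin 3 → ℕ → ExPt
deriving DecidableEq

namespace ExPt

/-- Adjacency: precisely the pairs at distance 1, namely
`y_i ~ x_{i+1}` (cyclically), `x_i ~ u_i^j`, `u_i^j ~ v_i^j`, `v_i^j ~ y_i`. -/
def adj : ExPt → ExPt → Bool
  | .y i, .x k => k == i + 1
  | .x k, .y i => k == i + 1
  | .x i, .u k _ => i == k
  | .u k _, .x i => i == k
  | .u i j, .v k l => i == k && j == l
  | .v k l, .u i j => i == k && j == l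
  | .v i _, .y k => i == k
  | .y k, .v i _ => i == k
  | _, _ => false

lemma adj_symm (a b : ExPt) : adj a b = adj b a := by
  cases a <;> cases b <;> rfl

/-- The distance of Example 5.2: `0` on the diagonal, `1` between adjacent
points, and `2` otherwise. -/
noncomputable def exDist (a b : ExPt) : ℝ :=
  if a = b then 0 else if adj a b then 1 else 2

lemma exDist_self (a : ExPt) : exDist a a = 0 := by simp [exDist]

lemma exDist_comm (a b : ExPt) : exDist a b = exDist b a := by
  unfold exDist
  rcases eq_or_ne a b with rfl | h
  · rfl
  · rw [if_neg h, if_neg (Ne.symm h), adj_symm]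

lemma one_le_exDist {a b : ExPt} (h : a ≠ b) : 1 ≤ exDist a b := by
  unfold exDist
  rw [if_neg h]
  split <;> norm_num

lemma exDist_le_two (a b : ExPt) : exDist a b ≤ 2 := by
  unfold exDist
  split
  · norm_num
  · split <;> norm_num

lemma exDist_triangle (a b c : ExPt) : exDist a c ≤ exDist a b + exDist b c := by
  rcases eq_or_ne a b with rfl | hab
  · rw [exDist_self, zero_add]
  rcases eq_or_ne b c with rfl | hbc
  · rw [exDist_self, add_zero]
  have h1 := one_le_exDist hab
  have h2 := one_le_exDist hbc
  have h3 := exDist_le_two a c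
  linarith

lemma exDist_eq_zero {a b : ExPt} (h : exDist a b = 0) : a = b := by
  by_contra hne
  have := one_le_exDist hne
  rw [h] at this
  norm_num at this

instance : TopologicalSpace ExPt := ⊥

instance : DiscreteTopology ExPt := ⟨rfl⟩

noncomputable instance : MetricSpace ExPt :=
  MetricSpace.ofDistTopology exDist exDist_self exDist_comm exDist_triangle
    (fun s => by
      constructor
      · intro _ x hx
        refine ⟨1 / 2, by norm_num, fun y hy => ?_⟩
        have : x = y := by
          by_contra hne
          have := one_le_exDist hne
          linarith
        rwa [← this]
      · intro _
        exact isOpen_discrete s)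
    (fun a b h => exDist_eq_zero h)

lemma dist_def (a b : ExPt) : dist a b = exDist a b := rfl

end ExPt

/-- `Lip₀(M)` has the local diameter 2 property: every slice of the closed
unit ball has diameter 2. -/
def LD2P (M : Type*) [MetricSpace M] (base : M) : Prop :=
  ∀ F : ↥(LipO M base) →L[ℝ] ℝ, ‖F‖ = 1 → ∀ α : ℝ, 0 < α →
    Metric.diam {f : ↥(LipO M base) | ‖f‖ ≤ 1 ∧ 1 - α < F f} = 2

namespace Ex52
open ExPt

noncomputable section

abbrev bpt : ExPt := ExPt.x 0

lemma dist_le_two' (a b : ExPt) : dist a b ≤ 2 := by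
  rw [ExPt.dist_def]; exact ExPt.exDist_le_two a b

lemma one_le_dist' {a b : ExPt} (h : a ≠ b) : 1 ≤ dist a b := by
  rw [ExPt.dist_def]; exact ExPt.one_le_exDist h

lemma dist_adj {a b : ExPt} (h : a ≠ b) (hadj : adj a b = true) : dist a b = 1 := by
  rw [ExPt.dist_def, ExPt.exDist, if_neg h, if_pos hadj]

lemma dist_nadj {a b : ExPt} (h : a ≠ b) (hadj : ¬ (adj a b = true)) : dist a b = 2 := by
  rw [ExPt.dist_def, ExPt.exDist, if_neg h, if_neg hadj]

lemma dist_xu (i : Fin 3) (j : ℕ) : dist (ExPt.x i) (ExPt.u i j) = 1 := by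
  apply dist_adj (by simp) (by simp [adj])

lemma dist_uv (i : Fin 3) (j : ℕ) : dist (ExPt.u i j) (ExPt.v i j) = 1 := by
  apply dist_adj (by simp) (by simp [adj])

lemma dist_vy (i : Fin 3) (j : ℕ) : dist (ExPt.v i j) (ExPt.y i) = 1 := by
  apply dist_adj (by simp) (by simp [adj])

lemma dist_yx (i : Fin 3) : dist (ExPt.y i) (ExPt.x (i+1)) = 1 := by
  apply dist_adj (by simp) (by simp [adj])

/-- points not adjacent to `u i j` (and different from it) are at distance 2 -/
lemma dist_u_other (i : Fin 3) (j : ℕ) (w : ExPt)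
    (h1 : w ≠ ExPt.u i j) (h2 : w ≠ ExPt.v i j) (h3 : w ≠ ExPt.x i) :
    dist (ExPt.u i j) w = 2 := by
  apply dist_nadj (fun hc => h1 hc.symm)
  cases w with
  | x k => simp [adj]; rintro rfl; exact h3 rfl
  | y k => simp [adj]
  | u k l => simp [adj]
  | v k l =>
      simp [adj]
      rintro rfl rfl; exact h2 rfl

lemma dist_v_other (i : Fin 3) (j : ℕ) (w : ExPt)
    (h1 : w ≠ ExPt.v i j) (h2 : w ≠ ExPt.u i j) (h3 : w ≠ ExPt.y i) :
    dist (ExPt.v i j) w = 2 := by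
  apply dist_nadj (fun hc => h1 hc.symm)
  cases w with
  | x k => simp [adj]
  | y k => simp [adj]; rintro rfl; exact h3 rfl
  | u k l => simp [adj]; rintro rfl rfl; exact h2 rfl
  | v k l => simp [adj]

/-- distances are integers -/
lemma dist_int (a b : ExPt) : ∃ z : ℤ, dist a b = (z : ℝ) := by
  rw [ExPt.dist_def, ExPt.exDist]
  split_ifs
  · exact ⟨0, by norm_num⟩
  · exact ⟨1, by norm_num⟩
  · exact ⟨2, by norm_num⟩

/-- 1-Lipschitz functions -/
def Lip1 (f : ExPt → ℝ) : Prop := ∀ p q : ExPt, |f p - f q| ≤ dist p q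

lemma Lip1.dist2 {f : ExPt → ℝ} (hf : Lip1 f) (p q : ExPt) : |f p - f q| ≤ 2 :=
  (hf p q).trans (dist_le_two' p q)

lemma lip1_of (f : ExPt → ℝ)
    (h1 : ∀ p q, adj p q = true → |f p - f q| ≤ 1)
    (h2 : ∀ p q, |f p - f q| ≤ 2) : Lip1 f := by
  intro p q
  rcases eq_or_ne p q with rfl | hne
  · simp
  rcases Classical.em (adj p q = true) with hadj | hadj
  · rw [dist_adj hne hadj]; exact h1 p q hadj
  · rw [dist_nadj hne hadj]; exact h2 p q

end
end Ex52
namespace Ex52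
noncomputable section

/-- the de Leeuw transform of `f` as a bounded family -/
def dlw (f : ExPt → ℝ) : Mt ExPt → ℝ :=
  fun p => (f p.1.1 - f p.1.2) / dist p.1.1 p.1.2

lemma abs_dlw_le {f : ExPt → ℝ} {C : ℝ} (hf : ∀ p q : ExPt, |f p - f q| ≤ C * dist p q)
    (hC : 0 ≤ C) (p : Mt ExPt) : |dlw f p| ≤ C := by
  have hd : (1:ℝ) ≤ dist p.1.1 p.1.2 := one_le_dist' p.2
  have hd0 : (0:ℝ) < dist p.1.1 p.1.2 := by linarith
  rw [dlw, abs_div, abs_of_pos hd0, div_le_iff₀ hd0]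
  calc |f p.1.1 - f p.1.2| ≤ C * dist p.1.1 p.1.2 := hf _ _
    _ ≤ C * dist p.1.1 p.1.2 := le_rfl

lemma memℓp_dlw {f : ExPt → ℝ} (hf : Lip1 f) : Memℓp (dlw f) ∞ := by
  apply memℓp_infty
  refine ⟨1, ?_⟩
  rintro r ⟨p, rfl⟩
  simpa [Real.norm_eq_abs] using abs_dlw_le (C := 1) (fun p q => by simpa using hf p q)
    zero_le_one p

/-- the element of `Lip₀(M)` determined by a 1-Lipschitz function vanishing at base -/
def mkel (f : ExPt → ℝ) (hf : Lip1 f) (hb : f bpt = 0) : ↥(LipO ExPt bpt) :=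
  ⟨⟨dlw f, memℓp_dlw hf⟩, ⟨f, hb, fun _ => rfl⟩⟩

lemma mkel_coord (f : ExPt → ℝ) (hf : Lip1 f) (hb : f bpt = 0) (p : Mt ExPt) :
    (((mkel f hf hb : ↥(LipO ExPt bpt)) : ellInfty ExPt) : Mt ExPt → ℝ) p = dlw f p := rfl

lemma norm_coe_lipo (g : ↥(LipO ExPt bpt)) : ‖g‖ = ‖(g : ellInfty ExPt)‖ := rfl

lemma norm_mkel_le (f : ExPt → ℝ) (hf : Lip1 f) (hb : f bpt = 0) :
    ‖mkel f hf hb‖ ≤ 1 := by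
  rw [norm_coe_lipo]
  apply lp.norm_le_of_forall_le zero_le_one
  intro p
  rw [Real.norm_eq_abs]
  exact abs_dlw_le (C := 1) (fun p q => by simpa using hf p q)
    zero_le_one p

/-- extensionality for elements of LipO via coordinates -/
lemma lipo_ext {g h : ↥(LipO ExPt bpt)}
    (H : ∀ p : Mt ExPt, ((g : ellInfty ExPt) : Mt ExPt → ℝ) p
      = ((h : ellInfty ExPt) : Mt ExPt → ℝ) p) : g = h := by
  apply Subtype.ext
  apply Subtype.ext
  funext p
  exact H p

/-- a 1-Lipschitz representative of any `g` in the unit ball, with `mkel` recovering `g`. -/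
lemma exists_rep (g : ↥(LipO ExPt bpt)) (hg : ‖g‖ ≤ 1) :
    ∃ (f : ExPt → ℝ) (hf : Lip1 f) (hb : f bpt = 0), mkel f hf hb = g := by
  obtain ⟨f, hb, hco⟩ := g.2
  have hf : Lip1 f := by
    intro p q
    rcases eq_or_ne p q with rfl | hne
    · simp
    have h1 : ‖((g : ellInfty ExPt) : Mt ExPt → ℝ) ⟨(p, q), hne⟩‖ ≤ ‖(g : ellInfty ExPt)‖ :=
      lp.norm_apply_le_norm ENNReal.top_ne_zero (g : ellInfty ExPt) ⟨(p, q), hne⟩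
    rw [← norm_coe_lipo] at h1
    have h2 := hco ⟨(p, q), hne⟩
    rw [h2] at h1
    have hd : (0:ℝ) < dist p q := lt_of_lt_of_le one_pos (one_le_dist' hne)
    have : |f p - f q| / dist p q ≤ 1 := by
      calc |f p - f q| / dist p q = ‖(f p - f q) / dist p q‖ := by
            rw [Real.norm_eq_abs, abs_div, abs_of_pos hd]
        _ ≤ ‖g‖ := h1
        _ ≤ 1 := hg
    calc |f p - f q| = (|f p - f q| / dist p q) * dist p q := by field_simp
      _ ≤ 1 * dist p q := by apply mul_le_mul_of_nonneg_right this (le_of_lt hd)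
      _ = dist p q := one_mul _
  refine ⟨f, hf, hb, ?_⟩
  apply lipo_ext
  intro p
  rw [mkel_coord, hco p]
  rfl

end
end Ex52
namespace Ex52
noncomputable section

lemma lip1_of_vals {f : ExPt → ℝ} (h : ∀ p, |f p| ≤ 1)
    (hadj : ∀ p q, ExPt.adj p q = true → |f p - f q| ≤ 1) : Lip1 f := by
  apply lip1_of f hadj
  intro p q
  calc |f p - f q| ≤ |f p| + |f q| := abs_sub _ _
    _ ≤ 1 + 1 := add_le_add (h p) (h q)
    _ = 2 := by norm_num

/-- indicator bump at `u i j` -/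
def chiU (i : Fin 3) (j : ℕ) : ExPt → ℝ := fun p => if p = ExPt.u i j then 1 else 0

def chiV (i : Fin 3) (j : ℕ) : ExPt → ℝ := fun p => if p = ExPt.v i j then 1 else 0

lemma lip1_ind (w : ExPt) : Lip1 (fun p => if p = w then (1:ℝ) else 0) := by
  apply lip1_of_vals
  · intro p; split_ifs <;> norm_num
  · intro p q _; split_ifs <;> norm_num

lemma lip1_chiU (i : Fin 3) (j : ℕ) : Lip1 (chiU i j) := lip1_ind _
lemma lip1_chiV (i : Fin 3) (j : ℕ) : Lip1 (chiV i j) := lip1_ind _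

lemma chiU_base (i : Fin 3) (j : ℕ) : chiU i j bpt = 0 := by simp [chiU, bpt]
lemma chiV_base (i : Fin 3) (j : ℕ) : chiV i j bpt = 0 := by simp [chiV, bpt]

def chiUel (i : Fin 3) (j : ℕ) : ↥(LipO ExPt bpt) :=
  mkel (chiU i j) (lip1_chiU i j) (chiU_base i j)

def chiVel (i : Fin 3) (j : ℕ) : ↥(LipO ExPt bpt) :=
  mkel (chiV i j) (lip1_chiV i j) (chiV_base i j)

end
end Ex52
namespace Ex52
noncomputable section

/-- signed sum of u-bumps -/
def sgnU (i : Fin 3) (S : Finset ℕ) (ε : ℕ → ℝ) : ExPt → ℝ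
  | ExPt.u k l => if k = i ∧ l ∈ S then ε l else 0
  | _ => 0

def sgnV (i : Fin 3) (S : Finset ℕ) (ε : ℕ → ℝ) : ExPt → ℝ
  | ExPt.v k l => if k = i ∧ l ∈ S then ε l else 0
  | _ => 0

lemma lip1_sgnU (i : Fin 3) (S : Finset ℕ) (ε : ℕ → ℝ) (hε : ∀ j, |ε j| ≤ 1) :
    Lip1 (sgnU i S ε) := by
  apply lip1_of_vals
  · intro p
    cases p <;> simp only [sgnU] <;> try { norm_num }
    split_ifs <;> simp [hε]
  · intro p q hadj
    cases p <;> cases q <;> simp [ExPt.adj] at hadj <;>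
      simp only [sgnU, sub_zero, zero_sub, abs_neg, abs_zero] <;>
      try { norm_num } <;>
      (try split_ifs) <;> simp [hε]

lemma lip1_sgnV (i : Fin 3) (S : Finset ℕ) (ε : ℕ → ℝ) (hε : ∀ j, |ε j| ≤ 1) :
    Lip1 (sgnV i S ε) := by
  apply lip1_of_vals
  · intro p
    cases p <;> simp only [sgnV] <;> try { norm_num }
    split_ifs <;> simp [hε]
  · intro p q hadj
    cases p <;> cases q <;> simp [ExPt.adj] at hadj <;>
      simp only [sgnV, sub_zero, zero_sub, abs_neg, abs_zero] <;>
      try { norm_num } <;>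
      (try split_ifs) <;> simp [hε]

lemma sgnU_base (i : Fin 3) (S : Finset ℕ) (ε : ℕ → ℝ) : sgnU i S ε bpt = 0 := rfl
lemma sgnV_base (i : Fin 3) (S : Finset ℕ) (ε : ℕ → ℝ) : sgnV i S ε bpt = 0 := rfl

lemma sgnU_eq_sum (i : Fin 3) (S : Finset ℕ) (ε : ℕ → ℝ) (p : ExPt) :
    sgnU i S ε p = ∑ j ∈ S, ε j * chiU i j p := by
  cases p with
  | u k l =>
      simp only [sgnU, chiU, ExPt.u.injEq, mul_ite, mul_one, mul_zero]
      by_cases hk : k = i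
      · subst hk
        simp only [true_and, and_true]
        rw [Finset.sum_ite_eq S l ε]
      · simp [hk, fun j => (show ¬(k = i ∧ l = j) from fun h => hk h.1)]
  | x k => simp [sgnU, chiU]
  | y k => simp [sgnU, chiU]
  | v k l => simp [sgnU, chiU]

lemma sgnV_eq_sum (i : Fin 3) (S : Finset ℕ) (ε : ℕ → ℝ) (p : ExPt) :
    sgnV i S ε p = ∑ j ∈ S, ε j * chiV i j p := by
  cases p with
  | v k l =>
      simp only [sgnV, chiV, ExPt.v.injEq, mul_ite, mul_one, mul_zero]
      by_cases hk : k = i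
      · subst hk
        simp only [true_and, and_true]
        rw [Finset.sum_ite_eq S l ε]
      · simp [hk, fun j => (show ¬(k = i ∧ l = j) from fun h => hk h.1)]
  | x k => simp [sgnV, chiV]
  | y k => simp [sgnV, chiV]
  | u k l => simp [sgnV, chiV]

/-- element-level identity for the signed sums -/
lemma mkel_sgnU (i : Fin 3) (S : Finset ℕ) (ε : ℕ → ℝ) (hε : ∀ j, |ε j| ≤ 1) :
    mkel (sgnU i S ε) (lip1_sgnU i S ε hε) (sgnU_base i S ε)
      = ∑ j ∈ S, ε j • chiUel i j := by
  apply lipo_ext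
  intro p
  have hco : ((((∑ j ∈ S, ε j • chiUel i j : ↥(LipO ExPt bpt))) : ellInfty ExPt)
      : Mt ExPt → ℝ) p = ∑ j ∈ S, ε j * dlw (chiU i j) p := by
    have h1 : (((∑ j ∈ S, ε j • chiUel i j : ↥(LipO ExPt bpt))) : ellInfty ExPt)
        = ∑ j ∈ S, ε j • ((chiUel i j : ↥(LipO ExPt bpt)) : ellInfty ExPt) := by
      push_cast
      rfl
    rw [h1, lp.coeFn_sum]
    simp only [Finset.sum_apply]
    refine Finset.sum_congr rfl fun j _ => ?_
    rw [lp.coeFn_smul]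
    rfl
  rw [hco, mkel_coord]
  simp only [dlw, sgnU_eq_sum]
  rw [← Finset.sum_sub_distrib, Finset.sum_div]
  refine Finset.sum_congr rfl fun j _ => ?_
  ring

lemma mkel_sgnV (i : Fin 3) (S : Finset ℕ) (ε : ℕ → ℝ) (hε : ∀ j, |ε j| ≤ 1) :
    mkel (sgnV i S ε) (lip1_sgnV i S ε hε) (sgnV_base i S ε)
      = ∑ j ∈ S, ε j • chiVel i j := by
  apply lipo_ext
  intro p
  have hco : ((((∑ j ∈ S, ε j • chiVel i j : ↥(LipO ExPt bpt))) : ellInfty ExPt)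
      : Mt ExPt → ℝ) p = ∑ j ∈ S, ε j * dlw (chiV i j) p := by
    have h1 : (((∑ j ∈ S, ε j • chiVel i j : ↥(LipO ExPt bpt))) : ellInfty ExPt)
        = ∑ j ∈ S, ε j • ((chiVel i j : ↥(LipO ExPt bpt)) : ellInfty ExPt) := by
      push_cast
      rfl
    rw [h1, lp.coeFn_sum]
    simp only [Finset.sum_apply]
    refine Finset.sum_congr rfl fun j _ => ?_
    rw [lp.coeFn_smul]
    rfl
  rw [hco, mkel_coord]
  simp only [dlw, sgnV_eq_sum]
  rw [← Finset.sum_sub_distrib, Finset.sum_div]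
  refine Finset.sum_congr rfl fun j _ => ?_
  ring

end
end Ex52
namespace Ex52
noncomputable section

variable (F : ↥(LipO ExPt bpt) →L[ℝ] ℝ)

lemma F_le_one (hF : ‖F‖ = 1) {g : ↥(LipO ExPt bpt)} (hg : ‖g‖ ≤ 1) : F g ≤ 1 := by
  calc F g ≤ |F g| := le_abs_self _
    _ = ‖F g‖ := (Real.norm_eq_abs _).symm
    _ ≤ ‖F‖ * ‖g‖ := F.le_opNorm g
    _ ≤ 1 * 1 := by rw [hF]; exact mul_le_mul_of_nonneg_left hg zero_le_one
    _ = 1 := one_mul 1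

set_option maxHeartbeats 1000000 in
lemma exists_near_max (hF : ‖F‖ = 1) {δ : ℝ} (hδ : 0 < δ) :
    ∃ g : ↥(LipO ExPt bpt), ‖g‖ ≤ 1 ∧ 1 - δ < F g := by
  by_contra hc
  push_neg at hc
  have h0 : (0:ℝ) ≤ 1 - δ := by
    have h := hc 0 (by rw [norm_zero]; exact zero_le_one)
    rw [map_zero] at h
    linarith
  have habs : ∀ g : ↥(LipO ExPt bpt), ‖g‖ ≤ 1 → |F g| ≤ 1 - δ := by
    intro g hg
    rw [abs_le]
    constructor
    · have h := hc (-g) (by rw [norm_neg]; exact hg)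
      rw [map_neg] at h
      linarith
    · exact hc g hg
  have hb : ‖F‖ ≤ 1 - δ := by
    apply ContinuousLinearMap.opNorm_le_bound F h0
    intro x
    rcases eq_or_ne x 0 with rfl | hx
    · rw [map_zero, norm_zero, norm_zero, mul_zero]
    have hxn : (0:ℝ) < ‖x‖ := by
      have hco : ((x : ellInfty ExPt)) ≠ 0 := fun h => hx (Subtype.ext h)
      have h2 : (0:ℝ) < ‖(x : ellInfty ExPt)‖ := norm_pos_iff.mpr hco
      rw [norm_coe_lipo]
      exact h2
    have h1 : ‖(‖x‖⁻¹ • x)‖ ≤ 1 := by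
      rw [norm_smul, norm_inv, norm_norm, inv_mul_cancel₀ (ne_of_gt hxn)]
    have h2 := habs _ h1
    rw [map_smul] at h2
    have : |F x| ≤ (1 - δ) * ‖x‖ := by
      rw [smul_eq_mul, abs_mul, abs_inv, abs_norm] at h2
      calc |F x| = ‖x‖ * (‖x‖⁻¹ * |F x|) := by
            rw [← mul_assoc, mul_inv_cancel₀ (ne_of_gt hxn), one_mul]
        _ ≤ ‖x‖ * (1 - δ) := mul_le_mul_of_nonneg_left h2 (le_of_lt hxn)
        _ = (1 - δ) * ‖x‖ := mul_comm _ _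
    rw [Real.norm_eq_abs]
    exact this
  rw [hF] at hb
  linarith

lemma sum_absF_le (hF : ‖F‖ = 1) (i : Fin 3) (S : Finset ℕ) :
    ∑ j ∈ S, |F (chiUel i j)| ≤ 1 := by
  set ε : ℕ → ℝ := fun j => if 0 ≤ F (chiUel i j) then 1 else -1 with hεdef
  have hε : ∀ j, |ε j| ≤ 1 := by intro j; simp only [hεdef]; split_ifs <;> norm_num
  have h1 : F (mkel (sgnU i S ε) (lip1_sgnU i S ε hε) (sgnU_base i S ε))
      = ∑ j ∈ S, |F (chiUel i j)| := by
    rw [mkel_sgnU i S ε hε, map_sum]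
    refine Finset.sum_congr rfl fun j _ => ?_
    rw [map_smul, smul_eq_mul]
    by_cases h : 0 ≤ F (chiUel i j)
    · simp only [hεdef]
      rw [if_pos h, one_mul, abs_of_nonneg h]
    · simp only [hεdef]
      rw [if_neg h, neg_one_mul, abs_of_neg (lt_of_not_ge h)]
  rw [← h1]
  exact F_le_one F hF (norm_mkel_le _ _ _)

lemma sum_absFV_le (hF : ‖F‖ = 1) (i : Fin 3) (S : Finset ℕ) :
    ∑ j ∈ S, |F (chiVel i j)| ≤ 1 := by
  set ε : ℕ → ℝ := fun j => if 0 ≤ F (chiVel i j) then 1 else -1 with hεdef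
  have hε : ∀ j, |ε j| ≤ 1 := by intro j; simp only [hεdef]; split_ifs <;> norm_num
  have h1 : F (mkel (sgnV i S ε) (lip1_sgnV i S ε hε) (sgnV_base i S ε))
      = ∑ j ∈ S, |F (chiVel i j)| := by
    rw [mkel_sgnV i S ε hε, map_sum]
    refine Finset.sum_congr rfl fun j _ => ?_
    rw [map_smul, smul_eq_mul]
    by_cases h : 0 ≤ F (chiVel i j)
    · simp only [hεdef]
      rw [if_pos h, one_mul, abs_of_nonneg h]
    · simp only [hεdef]
      rw [if_neg h, neg_one_mul, abs_of_neg (lt_of_not_ge h)]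
  rw [← h1]
  exact F_le_one F hF (norm_mkel_le _ _ _)

/-- there is a bridge where both bump functionals are small -/
lemma exists_good_bridge (hF : ‖F‖ = 1) (i : Fin 3) {θ : ℝ} (hθ : 0 < θ) :
    ∃ J : ℕ, |F (chiUel i J)| ≤ θ ∧ |F (chiVel i J)| ≤ θ := by
  by_contra hc
  push_neg at hc
  have key : ∀ j, θ < |F (chiUel i j)| + |F (chiVel i j)| := by
    intro j
    by_cases h : |F (chiUel i j)| ≤ θ
    · have h1 := hc j h
      have h0 : (0:ℝ) ≤ |F (chiUel i j)| := abs_nonneg _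
      linarith
    · push_neg at h
      have h0 : (0:ℝ) ≤ |F (chiVel i j)| := abs_nonneg _
      linarith
  obtain ⟨n, hn⟩ := exists_nat_gt (2 / θ)
  have hn1 : 0 < n := by
    by_contra hn0
    push_neg at hn0
    interval_cases n
    simp only [Nat.cast_zero] at hn
    have : (0:ℝ) < 2 / θ := by positivity
    linarith
  have hlt : (n:ℝ) * θ < ∑ j ∈ Finset.range n, (|F (chiUel i j)| + |F (chiVel i j)|) := by
    have := Finset.sum_lt_sum_of_nonempty (s := Finset.range n)
      (by simp [Finset.nonempty_range_iff]; omega)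
      (f := fun _ => θ) (fun j _ => key j)
    simpa [Finset.sum_const, Finset.card_range, nsmul_eq_mul] using this
  have hle : ∑ j ∈ Finset.range n, (|F (chiUel i j)| + |F (chiVel i j)|) ≤ 2 := by
    rw [Finset.sum_add_distrib]
    have := sum_absF_le F hF i (Finset.range n)
    have := sum_absFV_le F hF i (Finset.range n)
    linarith
  have h2 : (2:ℝ) < (n:ℝ) * θ := by
    rw [div_lt_iff₀ hθ] at hn
    linarith
  linarith

end
end Ex52
namespace Ex52
noncomputable section

/-- the two-sided slack of a 1-Lipschitz function on a pair -/
def sig (f : ExPt → ℝ) (p q : ExPt) : ℝ := dist p q - |f p - f q|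

lemma sig_nonneg {f : ExPt → ℝ} (hf : Lip1 f) (p q : ExPt) : 0 ≤ sig f p q :=
  sub_nonneg.mpr (hf p q)

lemma sig_comm (f : ExPt → ℝ) (p q : ExPt) : sig f p q = sig f q p := by
  rw [sig, sig, dist_comm, abs_sub_comm]

lemma sig_self (f : ExPt → ℝ) (p : ExPt) : sig f p p = 0 := by
  simp [sig]

/-- cost of a path -/
def pc (f : ExPt → ℝ) : List ExPt → ℝ
  | a :: b :: t => sig f a b + pc f (b :: t)
  | _ => 0

lemma pc_nonneg {f : ExPt → ℝ} (hf : Lip1 f) : ∀ l : List ExPt, 0 ≤ pc f l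
  | [] => le_refl 0
  | [_] => le_refl 0
  | a :: b :: t => by
      rw [pc]
      have := pc_nonneg hf (b :: t)
      have := sig_nonneg hf a b
      linarith

lemma pc_split (f : ExPt → ℝ) (p : ExPt) (B : List ExPt) :
    ∀ A : List ExPt, pc f (A ++ p :: B) = pc f (A ++ [p]) + pc f (p :: B)
  | [] => by simp [pc]
  | [a] => by simp [pc]
  | a :: a' :: A => by
      have ih := pc_split f p B (a' :: A)
      show pc f (a :: a' :: (A ++ p :: B)) = pc f (a :: a' :: (A ++ [p])) + pc f (p :: B)
      have e1 : pc f (a :: a' :: (A ++ p :: B))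
          = sig f a a' + pc f ((a' :: A) ++ p :: B) := rfl
      have e2 : pc f (a :: a' :: (A ++ [p]))
          = sig f a a' + pc f ((a' :: A) ++ [p]) := rfl
      rw [e1, e2, ih]
      ring

/-- path-distance induced by the slack -/
def sdist (f : ExPt → ℝ) (p q : ExPt) : ℝ :=
  sInf {c | ∃ l : List ExPt, c = pc f (p :: (l ++ [q]))}

lemma sdist_set_nonempty (f : ExPt → ℝ) (p q : ExPt) :
    {c | ∃ l : List ExPt, c = pc f (p :: (l ++ [q]))}.Nonempty :=
  ⟨pc f (p :: ([] ++ [q])), ⟨[], rfl⟩⟩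

lemma sdist_set_bdd {f : ExPt → ℝ} (hf : Lip1 f) (p q : ExPt) :
    BddBelow {c | ∃ l : List ExPt, c = pc f (p :: (l ++ [q]))} := by
  refine ⟨0, ?_⟩
  rintro c ⟨l, rfl⟩
  exact pc_nonneg hf _

lemma sdist_nonneg {f : ExPt → ℝ} (hf : Lip1 f) (p q : ExPt) : 0 ≤ sdist f p q := by
  apply le_csInf (sdist_set_nonempty f p q)
  rintro c ⟨l, rfl⟩
  exact pc_nonneg hf _

lemma le_sdist {f : ExPt → ℝ} {a : ℝ} (p q : ExPt)
    (h : ∀ l : List ExPt, a ≤ pc f (p :: (l ++ [q]))) : a ≤ sdist f p q := by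
  show a ≤ sInf {c | ∃ l : List ExPt, c = pc f (p :: (l ++ [q]))}
  apply le_csInf (sdist_set_nonempty f p q)
  rintro c ⟨l, rfl⟩
  exact h l

lemma sdist_le {f : ExPt → ℝ} (hf : Lip1 f) (p q : ExPt) (l : List ExPt) :
    sdist f p q ≤ pc f (p :: (l ++ [q])) :=
  csInf_le (sdist_set_bdd hf p q) ⟨l, rfl⟩

lemma sdist_self {f : ExPt → ℝ} (hf : Lip1 f) (p : ExPt) : sdist f p p = 0 := by
  apply le_antisymm
  · have := sdist_le hf p p []
    simpa [pc, sig_self] using this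
  · exact sdist_nonneg hf p p

lemma sdist_le_sig_add {f : ExPt → ℝ} (hf : Lip1 f) (p q r : ExPt) :
    sdist f p r ≤ sig f p q + sdist f q r := by
  rw [← sub_le_iff_le_add']
  apply le_sdist q r
  intro l
  rw [sub_le_iff_le_add']
  have h := sdist_le hf p r (q :: l)
  have : pc f (p :: ((q :: l) ++ [r])) = sig f p q + pc f (q :: (l ++ [r])) := rfl
  rw [this] at h
  exact h

lemma sdist_le_add_sig {f : ExPt → ℝ} (hf : Lip1 f) (p q r : ExPt) :
    sdist f p r ≤ sdist f p q + sig f q r := by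
  rw [← sub_le_iff_le_add]
  apply le_sdist p q
  intro l
  rw [sub_le_iff_le_add]
  have h := sdist_le hf p r (l ++ [q])
  have heq : pc f (p :: ((l ++ [q]) ++ [r])) = pc f (p :: (l ++ [q])) + sig f q r := by
    have h1 : p :: ((l ++ [q]) ++ [r]) = (p :: l) ++ q :: [r] := by simp
    have h2 : p :: (l ++ [q]) = (p :: l) ++ [q] := rfl
    rw [h1, h2, pc_split f q [r] (p :: l)]
    have : pc f (q :: [r]) = sig f q r := by simp [pc]
    rw [this]
  rw [heq] at h
  exact h

lemma sdist_triangle {f : ExPt → ℝ} (hf : Lip1 f) (p q r : ExPt) :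
    sdist f p r ≤ sdist f p q + sdist f q r := by
  rw [← sub_le_iff_le_add']
  apply le_sdist q r
  intro l₂
  rw [sub_le_iff_le_add', ← sub_le_iff_le_add]
  apply le_sdist p q
  intro l₁
  rw [sub_le_iff_le_add]
  have h := sdist_le hf p r (l₁ ++ q :: l₂)
  have heq : p :: ((l₁ ++ q :: l₂) ++ [r]) = (p :: l₁) ++ q :: (l₂ ++ [r]) := by simp
  rw [heq, pc_split f q (l₂ ++ [r]) (p :: l₁)] at h
  have h2 : pc f ((p :: l₁) ++ [q]) = pc f (p :: (l₁ ++ [q])) := rfl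
  rw [h2] at h
  linarith

/-- Lipschitz property of the path distance to a fixed target -/
lemma sdist_lip1 {f : ExPt → ℝ} (hf : Lip1 f) (t p q : ExPt) :
    |sdist f p t - sdist f q t| ≤ sig f p q := by
  rw [abs_le]
  constructor
  · have := sdist_le_sig_add hf q p t
    rw [sig_comm] at this
    linarith
  · have := sdist_le_sig_add hf p q t
    linarith

lemma sdist_lip1' {f : ExPt → ℝ} (hf : Lip1 f) (s p q : ExPt) :
    |sdist f s p - sdist f s q| ≤ sig f p q := by
  rw [abs_le]
  constructor
  · have := sdist_le_add_sig hf s p q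
    linarith
  · have h := sdist_le_add_sig hf s q p
    rw [sig_comm f q p] at h
    linarith

/-- single-step rigidity -/
lemma step_rigid {f : ExPt → ℝ} (hf : Lip1 f) (p q : ExPt) :
    ∃ z : ℤ, |f p - f q - z| ≤ sig f p q := by
  obtain ⟨zd, hzd⟩ := dist_int p q
  have hle : |f p - f q| ≤ dist p q := hf p q
  by_cases h : 0 ≤ f p - f q
  · refine ⟨zd, ?_⟩
    rw [abs_of_nonneg h] at hle
    rw [← hzd, abs_of_nonpos (by linarith), sig, abs_of_nonneg h]
    linarith
  · push_neg at h
    refine ⟨-zd, ?_⟩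
    rw [abs_of_neg h] at hle
    push_cast
    rw [← hzd, sub_neg_eq_add, abs_of_nonneg (by linarith), sig, abs_of_neg h]
    linarith

/-- path rigidity: along any path the increment of `f` is integral up to the cost -/
lemma pc_rigid {f : ExPt → ℝ} (hf : Lip1 f) :
    ∀ (l : List ExPt) (p q : ExPt), ∃ z : ℤ, |f p - f q - z| ≤ pc f (p :: (l ++ [q]))
  | [] => by
      intro p q
      obtain ⟨z, hz⟩ := step_rigid hf p q
      refine ⟨z, ?_⟩
      simpa [pc] using hz
  | r :: l => by
      intro p q
      obtain ⟨z₁, hz₁⟩ := step_rigid hf p r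
      obtain ⟨z₂, hz₂⟩ := pc_rigid hf l r q
      refine ⟨z₁ + z₂, ?_⟩
      have heq : pc f (p :: ((r :: l) ++ [q])) = sig f p r + pc f (r :: (l ++ [q])) := rfl
      rw [heq]
      have : f p - f q - (↑(z₁ + z₂) : ℝ) = (f p - f r - z₁) + (f r - f q - z₂) := by
        push_cast
        ring
      rw [this]
      calc |(f p - f r - z₁) + (f r - f q - z₂)| ≤ |f p - f r - z₁| + |f r - f q - z₂| :=
            abs_add_le _ _
        _ ≤ _ := add_le_add hz₁ hz₂

lemma sdist_rigid {f : ExPt → ℝ} (hf : Lip1 f) {p q : ExPt} {c : ℝ}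
    (h : sdist f p q < c) : ∃ z : ℤ, |f p - f q - z| < c := by
  obtain ⟨b, ⟨l, rfl⟩, hb⟩ := exists_lt_of_csInf_lt (sdist_set_nonempty f p q) h
  obtain ⟨z, hz⟩ := pc_rigid hf l p q
  exact ⟨z, lt_of_le_of_lt hz hb⟩

end
end Ex52
namespace Ex52
noncomputable section

lemma lip1_neg {f : ExPt → ℝ} (hf : Lip1 f) : Lip1 (fun p => -(f p)) := by
  intro p q
  have := hf p q
  rw [show -(f p) - -(f q) = -(f p - f q) by ring, abs_neg]
  exact this

/-- no integer strictly between 1 and 2 -/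
lemma no_int_between {z : ℤ} {r : ℝ} (h1 : |r - z| < r - 1) (h2 : 1 < r) (h3 : r ≤ 3/2) :
    False := by
  rw [abs_lt] at h1
  have hz1 : (1:ℝ) < (z:ℝ) := by linarith
  have hz2 : ((z:ℝ)) < 2 := by linarith
  have hz1' : (1:ℤ) < z := by exact_mod_cast hz1
  have hz2' : z < 2 := by exact_mod_cast hz2
  omega

/-- The move lemma: a bridge with gap in (1, 3/2] can be symmetrically fixed. -/
lemma move_lemma (f : ExPt → ℝ) (hf : Lip1 f) (hb : f bpt = 0) (i : Fin 3)
    (hd1 : 1 < f (ExPt.x i) - f (ExPt.y i)) (hd2 : f (ExPt.x i) - f (ExPt.y i) ≤ 3/2) :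
    ∃ e : ExPt → ℝ, Lip1 (fun p => f p + e p) ∧ Lip1 (fun p => f p - e p) ∧ e bpt = 0 ∧
      (f (ExPt.x i) + e (ExPt.x i)) - (f (ExPt.y i) + e (ExPt.y i)) = 1 := by
  set X := ExPt.x i with hX
  set Y := ExPt.y i with hY
  set d : ℝ := f X - f Y with hd
  set δ : ℝ := d - 1 with hδ
  have hδ0 : 0 < δ := by simp only [hδ]; linarith
  have hδ12 : δ ≤ 1/2 := by simp only [hδ]; linarith
  -- distances
  set Dy : ExPt → ℝ := fun p => sdist f p Y with hDy
  set Dx : ExPt → ℝ := fun p => sdist f X p with hDx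
  set ρxy : ℝ := sdist f X Y with hρxy
  set ρy : ℝ := sdist f bpt Y with hρy
  set ρx : ℝ := sdist f X bpt with hρx
  -- claim A : δ ≤ ρxy
  have hA : δ ≤ ρxy := by
    by_contra hc
    push_neg at hc
    obtain ⟨z, hz⟩ := sdist_rigid hf (show sdist f X Y < δ from hc)
    rw [← hd, hδ] at hz
    exact no_int_between hz hd1 hd2
  -- claim B : δ ≤ ρx + ρy
  have hB : δ ≤ ρx + ρy := by
    by_contra hc
    push_neg at hc
    have hx0 : (0:ℝ) ≤ ρx := sdist_nonneg hf X bpt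
    have hy0 : (0:ℝ) ≤ ρy := sdist_nonneg hf bpt Y
    set η : ℝ := (δ - ρx - ρy)/2 with hη
    have hη0 : 0 < η := by simp only [hη]; linarith
    obtain ⟨z₁, hz₁⟩ := sdist_rigid hf (show sdist f X bpt < ρx + η by simp only [← hρx]; linarith)
    obtain ⟨z₂, hz₂⟩ := sdist_rigid hf (show sdist f bpt Y < ρy + η by simp only [← hρy]; linarith)
    have hz : |d - ((z₁ + z₂ : ℤ) : ℝ)| < δ := by
      have : d - ((z₁ + z₂ : ℤ) : ℝ) = (f X - f bpt - z₁) + (f bpt - f Y - z₂) := by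
        push_cast
        simp only [hd]
        ring
      rw [this]
      calc |(f X - f bpt - z₁) + (f bpt - f Y - z₂)|
          ≤ |f X - f bpt - z₁| + |f bpt - f Y - z₂| := abs_add_le _ _
        _ < (ρx + η) + (ρy + η) := add_lt_add hz₁ hz₂
        _ = δ := by simp only [hη]; ring
    rw [hδ] at hz
    exact no_int_between hz hd1 hd2
  -- the split
  set s₁ : ℝ := min ρy δ with hs₁
  set s₂ : ℝ := δ - s₁ with hs₂
  have hy0 : (0:ℝ) ≤ ρy := sdist_nonneg hf bpt Y
  have hs₁0 : 0 ≤ s₁ := le_min hy0 (le_of_lt hδ0)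
  have hs₁δ : s₁ ≤ δ := min_le_right _ _
  have hs₁y : s₁ ≤ ρy := min_le_left _ _
  have hs₂0 : 0 ≤ s₂ := by simp only [hs₂]; linarith
  have hs₂δ : s₂ ≤ δ := by simp only [hs₂]; linarith
  have hs₂x : s₂ ≤ ρx := by
    rcases le_or_gt ρy δ with h | h
    · have : s₁ = ρy := min_eq_left h
      simp only [hs₂, this]
      linarith
    · have : s₁ = δ := min_eq_right (le_of_lt h)
      simp only [hs₂, this]
      have := sdist_nonneg hf X bpt
      linarith
  -- the perturbation
  set A : ExPt → ℝ := fun p => max (s₁ - Dy p) 0 with hA'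
  set B : ExPt → ℝ := fun p => max (s₂ - Dx p) 0 with hB'
  set e : ExPt → ℝ := fun p => A p - B p with he
  -- disjoint supports
  have hdisj : ∀ p, ¬(Dy p < s₁ ∧ Dx p < s₂) := by
    rintro p ⟨h1, h2⟩
    have ht : ρxy ≤ Dx p + Dy p := sdist_triangle hf X p Y
    have : ρxy < s₁ + s₂ := by linarith
    simp only [hs₂] at this
    linarith
  -- Lipschitz bound for e on slacks
  have eLip : ∀ p q, e p - e q ≤ sig f p q := by
    intro p q
    have hAp : 0 ≤ A p := le_max_right _ _
    have hAq : 0 ≤ A q := le_max_right _ _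
    have hBp : 0 ≤ B p := le_max_right _ _
    have hBq : 0 ≤ B q := le_max_right _ _
    have hALip : |A p - A q| ≤ sig f p q := by
      calc |A p - A q| ≤ |(s₁ - Dy p) - (s₁ - Dy q)| := abs_max_sub_max_le_abs _ _ _
        _ = |Dy q - Dy p| := by congr 1; ring
        _ = |Dy p - Dy q| := abs_sub_comm _ _
        _ ≤ sig f p q := sdist_lip1 hf Y p q
    have hBLip : |B p - B q| ≤ sig f p q := by
      calc |B p - B q| ≤ |(s₂ - Dx p) - (s₂ - Dx q)| := abs_max_sub_max_le_abs _ _ _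
        _ = |Dx q - Dx p| := by congr 1; ring
        _ = |Dx p - Dx q| := abs_sub_comm _ _
        _ ≤ sig f p q := sdist_lip1' hf X p q
    by_cases hP : 0 < A p
    · have hBp0 : B p = 0 := by
        have := hdisj p
        rw [hA'] at hP
        simp only at hP
        have hDy : Dy p < s₁ := by
          by_contra hcon
          push_neg at hcon
          have : max (s₁ - Dy p) 0 = 0 := max_eq_right (by linarith)
          rw [this] at hP
          exact lt_irrefl 0 hP
        have hDx : ¬ Dx p < s₂ := fun hcon => (hdisj p) ⟨hDy, hcon⟩
        push_neg at hDx
        simp only [hB']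
        exact max_eq_right (by linarith)
      by_cases hQ : 0 < B q
      · -- the cross case
        have hAq0 : A q = 0 := by
          have hDxq : Dx q < s₂ := by
            by_contra hcon
            push_neg at hcon
            have : max (s₂ - Dx q) 0 = 0 := max_eq_right (by linarith)
            simp only [hB'] at hQ
            rw [this] at hQ
            exact lt_irrefl 0 hQ
          have hDyq : ¬ Dy q < s₁ := fun hcon => (hdisj q) ⟨hcon, hDxq⟩
          push_neg at hDyq
          simp only [hA']
          exact max_eq_right (by linarith)
        have hDyp : Dy p < s₁ := by
          by_contra hcon
          push_neg at hcon
          simp only [hA'] at hP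
          rw [max_eq_right (by linarith)] at hP
          exact lt_irrefl 0 hP
        have hDxq : Dx q < s₂ := by
          by_contra hcon
          push_neg at hcon
          simp only [hB'] at hQ
          rw [max_eq_right (by linarith)] at hQ
          exact lt_irrefl 0 hQ
        -- chain bound
        have hchain : ρxy ≤ Dx q + sig f q p + Dy p := by
          have h1 : sdist f X Y ≤ sdist f X q + sdist f q Y := sdist_triangle hf X q Y
          have h2 : sdist f q Y ≤ sig f q p + sdist f p Y := sdist_le_sig_add hf q p Y
          simp only [hρxy, hDx, hDy] at *
          linarith
        have hAv : A p = s₁ - Dy p := by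
          simp only [hA']
          exact max_eq_left (by linarith)
        have hBv : B q = s₂ - Dx q := by
          simp only [hB']
          exact max_eq_left (by linarith)
        have : e p - e q = (s₁ - Dy p) + (s₂ - Dx q) := by
          simp only [he, hAv, hAq0, hBp0, hBv]
          ring
        rw [this]
        have hsig : sig f q p = sig f p q := sig_comm f q p
        have hs : s₁ + s₂ = δ := by simp only [hs₂]; ring
        linarith
      · -- q not in B support
        push_neg at hQ
        have hBq0 : B q = 0 := le_antisymm hQ hBq
        have : e p - e q = (A p - A q) - B p := by simp only [he, hBq0]; ring
        rw [this, hBp0]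
        have := le_abs_self (A p - A q)
        linarith
    · push_neg at hP
      have hAp0 : A p = 0 := le_antisymm hP hAp
      by_cases hQ : 0 < B q
      · have : e p - e q = (B q - B p) - A q := by simp only [he, hAp0]; ring
        rw [this]
        have h1 : B q - B p ≤ |B p - B q| := by
          rw [abs_sub_comm]
          exact le_abs_self _
        linarith
      · push_neg at hQ
        have hBq0 : B q = 0 := le_antisymm hQ hBq
        have hsig := sig_nonneg hf p q
        have : e p - e q = -(B p) - A q := by simp only [he, hAp0, hBq0]; ring
        rw [this]
        linarith
  have eLipAbs : ∀ p q, |e p - e q| ≤ sig f p q := by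
    intro p q
    rw [abs_le]
    constructor
    · have := eLip q p
      rw [sig_comm f q p] at this
      linarith
    · exact eLip p q
  -- values of e
  have hDyY : Dy Y = 0 := by simp only [hDy]; exact sdist_self hf Y
  have hDxX : Dx X = 0 := by simp only [hDx]; exact sdist_self hf X
  have hDyX : Dy X = ρxy := rfl
  have hDxY : Dx Y = ρxy := rfl
  have heY : e Y = s₁ := by
    simp only [he, hA', hB', hDyY, hDxY, sub_zero]
    rw [max_eq_left hs₁0, max_eq_right (by linarith)]
    ring
  have heX : e X = -s₂ := by
    simp only [he, hA', hB', hDyX, hDxX, sub_zero]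
    rw [max_eq_right (by linarith), max_eq_left hs₂0]
    ring
  have hebase : e bpt = 0 := by
    have h1 : Dy bpt = ρy := rfl
    have h2 : Dx bpt = ρx := rfl
    simp only [he, hA', hB', h1, h2]
    rw [max_eq_right (by linarith), max_eq_right (by linarith)]
    ring
  refine ⟨e, ?_, ?_, hebase, ?_⟩
  · intro p q
    have h1 := eLipAbs p q
    have h2 := hf p q
    calc |(f p + e p) - (f q + e q)| = |(f p - f q) + (e p - e q)| := by ring_nf
      _ ≤ |f p - f q| + |e p - e q| := abs_add_le _ _
      _ ≤ |f p - f q| + sig f p q := by linarith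
      _ = dist p q := by rw [sig]; ring
  · intro p q
    have h1 := eLipAbs p q
    have h2 := hf p q
    calc |(f p - e p) - (f q - e q)| = |(f p - f q) - (e p - e q)| := by ring_nf
      _ ≤ |f p - f q| + |e p - e q| := abs_sub _ _
      _ ≤ |f p - f q| + sig f p q := by linarith
      _ = dist p q := by rw [sig]; ring
  · rw [heX, heY]
    simp only [← hd, hs₂]
    ring

end
end Ex52
namespace Ex52
noncomputable section

/-- a bridge with gap at most 3/2 can be symmetrically brought to gap at most 1 -/
lemma fix_bridge (f : ExPt → ℝ) (hf : Lip1 f) (hb : f bpt = 0) (i : Fin 3)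
    (hd : |f (ExPt.x i) - f (ExPt.y i)| ≤ 3/2) :
    ∃ f' : ExPt → ℝ, Lip1 f' ∧ f' bpt = 0 ∧ Lip1 (fun p => 2 * f p - f' p) ∧
      |f' (ExPt.x i) - f' (ExPt.y i)| ≤ 1 := by
  rcases le_or_gt (|f (ExPt.x i) - f (ExPt.y i)|) 1 with h1 | h1
  · refine ⟨f, hf, hb, ?_, h1⟩
    have : (fun p => 2 * f p - f p) = f := funext fun p => by ring
    rw [this]
    exact hf
  · rw [abs_le] at hd
    rcases lt_abs.mp h1 with h | h
    · -- positive gap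
      obtain ⟨e, he1, he2, heb, hegap⟩ := move_lemma f hf hb i h hd.2
      refine ⟨fun p => f p + e p, he1, by simp only []; rw [hb, heb]; ring, ?_, ?_⟩
      · have : (fun p => 2 * f p - (f p + e p)) = fun p => f p - e p :=
          funext fun p => by ring
        rw [this]
        exact he2
      · rw [hegap]
        norm_num
    · -- negative gap
      have hd1 : 1 < (fun p => -(f p)) (ExPt.x i) - (fun p => -(f p)) (ExPt.y i) := by
        show (1:ℝ) < -(f (ExPt.x i)) - -(f (ExPt.y i))
        linarith
      have hd2 : (fun p => -(f p)) (ExPt.x i) - (fun p => -(f p)) (ExPt.y i) ≤ 3/2 := by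
        show -(f (ExPt.x i)) - -(f (ExPt.y i)) ≤ (3:ℝ)/2
        linarith
      obtain ⟨e, he1, he2, heb, hegap⟩ := move_lemma (fun p => -(f p)) (lip1_neg hf)
        (by simp [hb]) i hd1 hd2
      have hegap' : -(f (ExPt.x i)) + e (ExPt.x i) - (-(f (ExPt.y i)) + e (ExPt.y i)) = 1 :=
        hegap
      refine ⟨fun p => f p - e p, ?_, by simp only []; rw [hb, heb]; ring, ?_, ?_⟩
      · have : (fun p => f p - e p) = fun p => -((fun q => -(f q) + e q) p) :=
          funext fun p => by show f p - e p = -(-(f p) + e p); ring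
        rw [this]
        exact lip1_neg he1
      · have : (fun p => 2 * f p - (f p - e p)) = fun p => -((fun q => -(f q) - e q) p) :=
          funext fun p => by show 2 * f p - (f p - e p) = -(-(f p) - e p); ring
        rw [this]
        exact lip1_neg he2
      · show |f (ExPt.x i) - e (ExPt.x i) - (f (ExPt.y i) - e (ExPt.y i))| ≤ 1
        have : f (ExPt.x i) - e (ExPt.x i) - (f (ExPt.y i) - e (ExPt.y i)) = -1 := by
          linarith
        rw [this]
        norm_num

/-- hexagon lemma: some bridge has gap at most 3/2 -/
lemma hex (f : ExPt → ℝ) (hf : Lip1 f) :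
    ∃ i : Fin 3, |f (ExPt.x i) - f (ExPt.y i)| ≤ 3/2 := by
  by_contra hc
  push_neg at hc
  have h0 := hc 0
  have h1 := hc 1
  have h2 := hc 2
  -- edges
  have e0 : |f (ExPt.y 0) - f (ExPt.x 1)| ≤ 1 := by
    have h := hf (ExPt.y 0) (ExPt.x 1)
    rwa [show (ExPt.x 1) = ExPt.x (0 + 1) from rfl, dist_yx 0] at h
  have e1 : |f (ExPt.y 1) - f (ExPt.x 2)| ≤ 1 := by
    have h := hf (ExPt.y 1) (ExPt.x 2)
    rwa [show (ExPt.x 2) = ExPt.x (1 + 1) from rfl, dist_yx 1] at h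
  have e2 : |f (ExPt.y 2) - f (ExPt.x 0)| ≤ 1 := by
    have h := hf (ExPt.y 2) (ExPt.x 0)
    rwa [show (ExPt.x 0) = ExPt.x (2 + 1) from rfl, dist_yx 2] at h
  obtain ⟨e0a, e0b⟩ := abs_le.mp e0
  obtain ⟨e1a, e1b⟩ := abs_le.mp e1
  obtain ⟨e2a, e2b⟩ := abs_le.mp e2
  -- pairwise bounds
  obtain ⟨p1a, p1b⟩ := abs_le.mp (hf.dist2 (ExPt.x 0) (ExPt.x 1))
  obtain ⟨p2a, p2b⟩ := abs_le.mp (hf.dist2 (ExPt.x 0) (ExPt.x 2))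
  obtain ⟨p3a, p3b⟩ := abs_le.mp (hf.dist2 (ExPt.x 1) (ExPt.x 2))
  obtain ⟨p4a, p4b⟩ := abs_le.mp (hf.dist2 (ExPt.y 0) (ExPt.y 1))
  obtain ⟨p5a, p5b⟩ := abs_le.mp (hf.dist2 (ExPt.y 0) (ExPt.y 2))
  obtain ⟨p6a, p6b⟩ := abs_le.mp (hf.dist2 (ExPt.y 1) (ExPt.y 2))
  obtain ⟨p7a, p7b⟩ := abs_le.mp (hf.dist2 (ExPt.x 0) (ExPt.y 0))
  obtain ⟨p8a, p8b⟩ := abs_le.mp (hf.dist2 (ExPt.x 0) (ExPt.y 1))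
  obtain ⟨p9a, p9b⟩ := abs_le.mp (hf.dist2 (ExPt.x 0) (ExPt.y 2))
  obtain ⟨pAa, pAb⟩ := abs_le.mp (hf.dist2 (ExPt.x 1) (ExPt.y 0))
  obtain ⟨pBa, pBb⟩ := abs_le.mp (hf.dist2 (ExPt.x 1) (ExPt.y 1))
  obtain ⟨pCa, pCb⟩ := abs_le.mp (hf.dist2 (ExPt.x 1) (ExPt.y 2))
  obtain ⟨pDa, pDb⟩ := abs_le.mp (hf.dist2 (ExPt.x 2) (ExPt.y 0))
  obtain ⟨pEa, pEb⟩ := abs_le.mp (hf.dist2 (ExPt.x 2) (ExPt.y 1))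
  obtain ⟨pFa, pFb⟩ := abs_le.mp (hf.dist2 (ExPt.x 2) (ExPt.y 2))
  rcases lt_abs.mp h0 with d0 | d0 <;> rcases lt_abs.mp h1 with d1 | d1 <;>
    rcases lt_abs.mp h2 with d2 | d2 <;> linarith

end
end Ex52
namespace Ex52
noncomputable section

lemma lip1_of_onesided {g : ExPt → ℝ} (h : ∀ p q, g p - g q ≤ dist p q) : Lip1 g := by
  intro p q
  rw [abs_le]
  constructor
  · have h1 := h q p
    rw [dist_comm] at h1
    linarith
  · exact h p q

/-- existence of extreme bridge values -/
lemma bridge_vals (f' : ExPt → ℝ) (hf : Lip1 f') (i : Fin 3) (ε : ℝ)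
    (hε : ε = 1 ∨ ε = -1) (hd : |f' (ExPt.x i) - f' (ExPt.y i)| ≤ 1) :
    ∃ t s : ℝ, t - s = ε ∧ |t - f' (ExPt.x i)| ≤ 1 ∧ |s - f' (ExPt.y i)| ≤ 1 ∧
      (∀ w, |t - f' w| ≤ 2) ∧ (∀ w, |s - f' w| ≤ 2) := by
  obtain ⟨hd1, hd2⟩ := abs_le.mp hd
  set fx := f' (ExPt.x i) with hfx
  set fy := f' (ExPt.y i) with hfy
  set If := sInf (Set.range f') with hIf
  have hbdd : BddBelow (Set.range f') := by
    refine ⟨fx - 2, ?_⟩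
    rintro _ ⟨w, rfl⟩
    have := abs_le.mp (hf.dist2 (ExPt.x i) w)
    linarith [this.2]
  have hIle : ∀ w, If ≤ f' w := fun w => csInf_le hbdd ⟨w, rfl⟩
  have hleI : ∀ w, f' w - 2 ≤ If := by
    intro w
    apply le_csInf (⟨fx, ⟨ExPt.x i, rfl⟩⟩ : (Set.range f').Nonempty)
    rintro _ ⟨w', rfl⟩
    have := abs_le.mp (hf.dist2 w w')
    linarith [this.2]
  rcases hε with rfl | rfl
  · -- t - s = 1
    refine ⟨min (fx + 1) (If + 2), min (fx + 1) (If + 2) - 1, by ring, ?_, ?_, ?_, ?_⟩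
    · rw [abs_le]
      constructor
      · have h1 : fx ≤ fx + 1 := by linarith
        have h2 : fx ≤ If + 2 := by have := hleI (ExPt.x i); linarith
        have := le_min h1 h2
        linarith
      · have := min_le_left (fx + 1) (If + 2)
        linarith
    · rw [abs_le]
      constructor
      · have h1 : fy ≤ fx + 1 := by linarith
        have h2 : fy ≤ If + 2 := by have := hleI (ExPt.y i); linarith
        have := le_min h1 h2
        linarith
      · have := min_le_left (fx + 1) (If + 2)
        linarith
    · intro w
      rw [abs_le]
      constructor
      · have h1 := abs_le.mp (hf.dist2 (ExPt.x i) w)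
        have h2 : fx ≤ min (fx + 1) (If + 2) := by
          have h3 : fx ≤ If + 2 := by have := hleI (ExPt.x i); linarith
          exact le_min (by linarith) h3
        linarith [h1.1]
      · have h1 := min_le_right (fx + 1) (If + 2)
        have := hIle w
        linarith
    · intro w
      rw [abs_le]
      constructor
      · have h1 : f' w - 1 ≤ fx + 1 := by
          have := abs_le.mp (hf.dist2 w (ExPt.x i))
          linarith [this.2]
        have h2 : f' w - 1 ≤ If + 2 := by have := hleI w; linarith
        have := le_min h1 h2
        linarith
      · have h1 := min_le_right (fx + 1) (If + 2)
        have := hIle w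
        linarith
  · -- t - s = -1
    refine ⟨min (fy + 1) (If + 2) - 1, min (fy + 1) (If + 2), by ring, ?_, ?_, ?_, ?_⟩
    · rw [abs_le]
      constructor
      · have h1 : fx ≤ fy + 1 := by linarith
        have h2 : fx ≤ If + 2 := by have := hleI (ExPt.x i); linarith
        have := le_min h1 h2
        linarith
      · have := min_le_left (fy + 1) (If + 2)
        linarith
    · rw [abs_le]
      constructor
      · have h1 : fy ≤ fy + 1 := by linarith
        have h2 : fy ≤ If + 2 := by have := hleI (ExPt.y i); linarith
        have := le_min h1 h2
        linarith
      · have := min_le_left (fy + 1) (If + 2)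
        linarith
    · intro w
      rw [abs_le]
      constructor
      · have h1 : f' w - 1 ≤ fy + 1 := by
          have := abs_le.mp (hf.dist2 w (ExPt.y i))
          linarith [this.2]
        have h2 : f' w - 1 ≤ If + 2 := by have := hleI w; linarith
        have := le_min h1 h2
        linarith
      · have h1 := min_le_right (fy + 1) (If + 2)
        have := hIle w
        linarith
    · intro w
      rw [abs_le]
      constructor
      · have h1 := abs_le.mp (hf.dist2 (ExPt.y i) w)
        have h2 : fy ≤ min (fy + 1) (If + 2) := by
          have h3 : fy ≤ If + 2 := by have := hleI (ExPt.y i); linarith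
          exact le_min (by linarith) h3
        linarith [h1.1]
      · have h1 := min_le_right (fy + 1) (If + 2)
        have := hIle w
        linarith

/-- the rewritten function -/
def brg (f' : ExPt → ℝ) (i : Fin 3) (J : ℕ) (t s : ℝ) : ExPt → ℝ :=
  fun p => if p = ExPt.u i J then t else if p = ExPt.v i J then s else f' p

lemma brg_u (f' : ExPt → ℝ) (i : Fin 3) (J : ℕ) (t s : ℝ) :
    brg f' i J t s (ExPt.u i J) = t := by simp [brg]

lemma brg_v (f' : ExPt → ℝ) (i : Fin 3) (J : ℕ) (t s : ℝ) :
    brg f' i J t s (ExPt.v i J) = s := by simp [brg]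

lemma brg_other (f' : ExPt → ℝ) (i : Fin 3) (J : ℕ) (t s : ℝ) {w : ExPt}
    (h1 : w ≠ ExPt.u i J) (h2 : w ≠ ExPt.v i J) : brg f' i J t s w = f' w := by
  simp [brg, h1, h2]

lemma brg_base (f' : ExPt → ℝ) (i : Fin 3) (J : ℕ) (t s : ℝ) (hb : f' bpt = 0) :
    brg f' i J t s bpt = 0 := by
  rw [brg_other f' i J t s (by simp [bpt]) (by simp [bpt])]
  exact hb

lemma lip1_brg (f' : ExPt → ℝ) (hf : Lip1 f') (i : Fin 3) (J : ℕ) (t s : ℝ)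
    (hts : |t - s| ≤ 1) (htx : |t - f' (ExPt.x i)| ≤ 1) (hsy : |s - f' (ExPt.y i)| ≤ 1)
    (ht2 : ∀ w, |t - f' w| ≤ 2) (hs2 : ∀ w, |s - f' w| ≤ 2) :
    Lip1 (brg f' i J t s) := by
  apply lip1_of_onesided
  intro p q
  rcases eq_or_ne p q with rfl | hpq
  · simp [dist_nonneg]
  by_cases hpu : p = ExPt.u i J
  · subst hpu
    rw [brg_u]
    by_cases hqv : q = ExPt.v i J
    · subst hqv
      rw [brg_v, dist_uv]
      have := abs_le.mp hts
      linarith [this.2]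
    · rw [brg_other f' i J t s hpq.symm hqv]
      by_cases hqx : q = ExPt.x i
      · subst hqx
        have hd : dist (ExPt.u i J) (ExPt.x i) = 1 := by
          rw [dist_comm]; exact dist_xu i J
        rw [hd]
        have := abs_le.mp htx
        linarith [this.2]
      · rw [dist_u_other i J q hpq.symm hqv hqx]
        have := abs_le.mp (ht2 q)
        linarith [this.2]
  · by_cases hpv : p = ExPt.v i J
    · subst hpv
      rw [brg_v]
      by_cases hqu : q = ExPt.u i J
      · subst hqu
        rw [brg_u]
        have hd : dist (ExPt.v i J) (ExPt.u i J) = 1 := by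
          rw [dist_comm]; exact dist_uv i J
        rw [hd]
        have := abs_le.mp hts
        linarith [this.1]
      · rw [brg_other f' i J t s hqu hpq.symm]
        by_cases hqy : q = ExPt.y i
        · subst hqy
          rw [dist_vy]
          have := abs_le.mp hsy
          linarith [this.2]
        · rw [dist_v_other i J q hpq.symm hqu hqy]
          have := abs_le.mp (hs2 q)
          linarith [this.2]
    · rw [brg_other f' i J t s hpu hpv]
      by_cases hqu : q = ExPt.u i J
      · subst hqu
        rw [brg_u]
        by_cases hpx : p = ExPt.x i
        · subst hpx
          rw [dist_xu]
          have := abs_le.mp htx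
          linarith [this.1]
        · rw [dist_comm, dist_u_other i J p hpu hpv hpx]
          have := abs_le.mp (ht2 p)
          linarith [this.1]
      · by_cases hqv : q = ExPt.v i J
        · subst hqv
          rw [brg_v]
          by_cases hpy : p = ExPt.y i
          · subst hpy
            have hd : dist (ExPt.y i) (ExPt.v i J) = 1 := by
              rw [dist_comm]; exact dist_vy i J
            rw [hd]
            have := abs_le.mp hsy
            linarith [this.1]
          · rw [dist_comm, dist_v_other i J p hpv hpu hpy]
            have := abs_le.mp (hs2 p)
            linarith [this.1]
        · rw [brg_other f' i J t s hqu hqv]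
          have := abs_le.mp (hf p q)
          linarith [this.2]

end
end Ex52
namespace Ex52
noncomputable section

lemma mkel_double (f f' : ExPt → ℝ) (hf : Lip1 f) (hb : f bpt = 0)
    (hf' : Lip1 f') (hb' : f' bpt = 0)
    (h2 : Lip1 (fun p => 2 * f p - f' p)) (hb2 : (fun p => 2 * f p - f' p) bpt = 0) :
    mkel f' hf' hb' = (2:ℝ) • mkel f hf hb - mkel (fun p => 2 * f p - f' p) h2 hb2 := by
  apply lipo_ext
  intro p
  have h1 : (((2:ℝ) • mkel f hf hb - mkel (fun p => 2 * f p - f' p) h2 hb2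
      : ↥(LipO ExPt bpt)) : ellInfty ExPt)
      = (2:ℝ) • ((mkel f hf hb : ↥(LipO ExPt bpt)) : ellInfty ExPt)
        - ((mkel (fun p => 2 * f p - f' p) h2 hb2 : ↥(LipO ExPt bpt)) : ellInfty ExPt) := by
    push_cast
    rfl
  rw [h1, lp.coeFn_sub, Pi.sub_apply, lp.coeFn_smul, Pi.smul_apply]
  rw [mkel_coord, mkel_coord, mkel_coord]
  simp only [dlw, smul_eq_mul]
  ring

lemma brg_pointwise (f' : ExPt → ℝ) (i : Fin 3) (J : ℕ) (t s : ℝ) (w : ExPt) :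
    brg f' i J t s w = f' w + (t - f' (ExPt.u i J)) * chiU i J w
      + (s - f' (ExPt.v i J)) * chiV i J w := by
  by_cases h1 : w = ExPt.u i J
  · subst h1
    rw [brg_u]
    have h2 : chiU i J (ExPt.u i J) = 1 := by simp [chiU]
    have h3 : chiV i J (ExPt.u i J) = 0 := by simp [chiV]
    rw [h2, h3]
    ring
  · by_cases h2 : w = ExPt.v i J
    · subst h2
      rw [brg_v]
      have h3 : chiU i J (ExPt.v i J) = 0 := by simp [chiU]
      have h4 : chiV i J (ExPt.v i J) = 1 := by simp [chiV]
      rw [h3, h4]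
      ring
    · rw [brg_other f' i J t s h1 h2]
      have h3 : chiU i J w = 0 := by simp [chiU, h1]
      have h4 : chiV i J w = 0 := by simp [chiV, h2]
      rw [h3, h4]
      ring

lemma mkel_brg (f' : ExPt → ℝ) (hf' : Lip1 f') (hb' : f' bpt = 0) (i : Fin 3) (J : ℕ)
    (t s : ℝ) (hl : Lip1 (brg f' i J t s)) (hbb : brg f' i J t s bpt = 0) :
    mkel (brg f' i J t s) hl hbb = mkel f' hf' hb'
      + (t - f' (ExPt.u i J)) • chiUel i J + (s - f' (ExPt.v i J)) • chiVel i J := by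
  apply lipo_ext
  intro p
  have h1 : ((((mkel f' hf' hb' + (t - f' (ExPt.u i J)) • chiUel i J
      + (s - f' (ExPt.v i J)) • chiVel i J) : ↥(LipO ExPt bpt))) : ellInfty ExPt)
      = ((mkel f' hf' hb' : ↥(LipO ExPt bpt)) : ellInfty ExPt)
        + (t - f' (ExPt.u i J)) • ((chiUel i J : ↥(LipO ExPt bpt)) : ellInfty ExPt)
        + (s - f' (ExPt.v i J)) • ((chiVel i J : ↥(LipO ExPt bpt)) : ellInfty ExPt) := by
    push_cast
    rfl
  rw [h1, lp.coeFn_add, Pi.add_apply, lp.coeFn_add, Pi.add_apply,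
    lp.coeFn_smul, Pi.smul_apply, lp.coeFn_smul, Pi.smul_apply]
  rw [mkel_coord]
  show dlw (brg f' i J t s) p = dlw f' p + (t - f' (ExPt.u i J)) • dlw (chiU i J) p
      + (s - f' (ExPt.v i J)) • dlw (chiV i J) p
  simp only [dlw, smul_eq_mul, brg_pointwise f' i J t s]
  ring

end
end Ex52
/-- Example 5.2: the space `Lip₀(M)` over the metric space `M = ExPt`
(with base point `0 = x_1`) has the local diameter 2 property. -/
theorem stmt17 : LD2P ExPt (ExPt.x 0) := by
  intro F hF α hα
  apply le_antisymm
  · apply Metric.diam_le_of_forall_dist_le (by norm_num)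
    rintro g₁ ⟨hg₁, _⟩ g₂ ⟨hg₂, _⟩
    rw [dist_eq_norm]
    calc ‖g₁ - g₂‖ ≤ ‖g₁‖ + ‖g₂‖ := norm_sub_le _ _
      _ ≤ 2 := by linarith
  · -- lower bound: produce two far points of the slice
    obtain ⟨gstar, hgn, hgF⟩ := Ex52.exists_near_max F hF (show 0 < α/8 by positivity)
    obtain ⟨f, hf, hb, hmk⟩ := Ex52.exists_rep gstar hgn
    obtain ⟨i, hi⟩ := Ex52.hex f hf
    obtain ⟨f', hf', hb', h2f, hd'⟩ := Ex52.fix_bridge f hf hb i hi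
    have h2fb : (fun p => 2 * f p - f' p) Ex52.bpt = 0 := by
      show 2 * f Ex52.bpt - f' Ex52.bpt = 0
      rw [hb, hb']
      ring
    have hFf' : 2 * F gstar - 1 ≤ F (Ex52.mkel f' hf' hb') := by
      rw [Ex52.mkel_double f f' hf hb hf' hb' h2f h2fb, hmk]
      rw [map_sub, map_smul, smul_eq_mul]
      have hle := Ex52.F_le_one F hF (Ex52.norm_mkel_le (fun p => 2 * f p - f' p) h2f h2fb)
      linarith
    obtain ⟨J, hJu, hJv⟩ := Ex52.exists_good_bridge F hF i (show 0 < α/32 by positivity)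
    obtain ⟨t₁, s₁, hts₁, htx₁, hsy₁, ht2₁, hs2₁⟩ :=
      Ex52.bridge_vals f' hf' i 1 (Or.inl rfl) hd'
    obtain ⟨t₂, s₂, hts₂, htx₂, hsy₂, ht2₂, hs2₂⟩ :=
      Ex52.bridge_vals f' hf' i (-1) (Or.inr rfl) hd'
    have habs₁ : |t₁ - s₁| ≤ 1 := by rw [hts₁]; norm_num
    have habs₂ : |t₂ - s₂| ≤ 1 := by rw [hts₂]; norm_num
    have hlb₁ := Ex52.lip1_brg f' hf' i J t₁ s₁ habs₁ htx₁ hsy₁ ht2₁ hs2₁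
    have hlb₂ := Ex52.lip1_brg f' hf' i J t₂ s₂ habs₂ htx₂ hsy₂ ht2₂ hs2₂
    set g₁ := Ex52.mkel (Ex52.brg f' i J t₁ s₁) hlb₁ (Ex52.brg_base f' i J t₁ s₁ hb')
      with hg₁def
    set g₂ := Ex52.mkel (Ex52.brg f' i J t₂ s₂) hlb₂ (Ex52.brg_base f' i J t₂ s₂ hb')
      with hg₂def
    have hF₁ : 1 - α < F g₁ := by
      rw [hg₁def, Ex52.mkel_brg f' hf' hb' i J t₁ s₁ hlb₁ (Ex52.brg_base f' i J t₁ s₁ hb')]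
      rw [map_add, map_add, map_smul, map_smul, smul_eq_mul, smul_eq_mul]
      have hb₁ : |(t₁ - f' (ExPt.u i J)) * F (Ex52.chiUel i J)| ≤ 2 * (α/32) := by
        rw [abs_mul]
        exact mul_le_mul (ht2₁ _) hJu (abs_nonneg _) (by norm_num)
      have hb₂ : |(s₁ - f' (ExPt.v i J)) * F (Ex52.chiVel i J)| ≤ 2 * (α/32) := by
        rw [abs_mul]
        exact mul_le_mul (hs2₁ _) hJv (abs_nonneg _) (by norm_num)
      have h1 := (abs_le.mp hb₁).1
      have h2 := (abs_le.mp hb₂).1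
      linarith
    have hF₂ : 1 - α < F g₂ := by
      rw [hg₂def, Ex52.mkel_brg f' hf' hb' i J t₂ s₂ hlb₂ (Ex52.brg_base f' i J t₂ s₂ hb')]
      rw [map_add, map_add, map_smul, map_smul, smul_eq_mul, smul_eq_mul]
      have hb₁ : |(t₂ - f' (ExPt.u i J)) * F (Ex52.chiUel i J)| ≤ 2 * (α/32) := by
        rw [abs_mul]
        exact mul_le_mul (ht2₂ _) hJu (abs_nonneg _) (by norm_num)
      have hb₂ : |(s₂ - f' (ExPt.v i J)) * F (Ex52.chiVel i J)| ≤ 2 * (α/32) := by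
        rw [abs_mul]
        exact mul_le_mul (hs2₂ _) hJv (abs_nonneg _) (by norm_num)
      have h1 := (abs_le.mp hb₁).1
      have h2 := (abs_le.mp hb₂).1
      linarith
    have hn₁ : ‖g₁‖ ≤ 1 := Ex52.norm_mkel_le _ _ _
    have hn₂ : ‖g₂‖ ≤ 1 := Ex52.norm_mkel_le _ _ _
    set p0 : Mt ExPt := ⟨(ExPt.u i J, ExPt.v i J), by simp⟩ with hp0
    have hco : ((g₁ - g₂ : ↥(LipO ExPt Ex52.bpt)) : ellInfty ExPt)
        = (g₁ : ellInfty ExPt) - (g₂ : ellInfty ExPt) := by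
      push_cast
      rfl
    have hcoord : (((g₁ - g₂ : ↥(LipO ExPt Ex52.bpt)) : ellInfty ExPt) : Mt ExPt → ℝ) p0
        = 2 := by
      rw [hco, lp.coeFn_sub, Pi.sub_apply, hg₁def, hg₂def, Ex52.mkel_coord, Ex52.mkel_coord]
      show (Ex52.brg f' i J t₁ s₁ (ExPt.u i J) - Ex52.brg f' i J t₁ s₁ (ExPt.v i J))
            / dist (ExPt.u i J) (ExPt.v i J)
          - (Ex52.brg f' i J t₂ s₂ (ExPt.u i J) - Ex52.brg f' i J t₂ s₂ (ExPt.v i J))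
            / dist (ExPt.u i J) (ExPt.v i J) = 2
      rw [Ex52.brg_u, Ex52.brg_v, Ex52.brg_u, Ex52.brg_v, Ex52.dist_uv, div_one, div_one,
        hts₁, hts₂]
      norm_num
    have hdist : 2 ≤ dist g₁ g₂ := by
      rw [dist_eq_norm, Ex52.norm_coe_lipo]
      have h := lp.norm_apply_le_norm ENNReal.top_ne_zero
        ((g₁ - g₂ : ↥(LipO ExPt Ex52.bpt)) : ellInfty ExPt) p0
      rw [hcoord] at h
      calc (2:ℝ) = ‖(2:ℝ)‖ := by norm_num
        _ ≤ _ := h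
    have hSbdd : Bornology.IsBounded {g : ↥(LipO ExPt Ex52.bpt) | ‖g‖ ≤ 1 ∧ 1 - α < F g} := by
      apply (Metric.isBounded_closedBall (x := (0 : ↥(LipO ExPt Ex52.bpt))) (r := 1)).subset
      intro g hg
      rw [Metric.mem_closedBall, dist_zero_right]
      exact hg.1
    have hm₁ : g₁ ∈ {g : ↥(LipO ExPt Ex52.bpt) | ‖g‖ ≤ 1 ∧ 1 - α < F g} := ⟨hn₁, hF₁⟩
    have hm₂ : g₂ ∈ {g : ↥(LipO ExPt Ex52.bpt) | ‖g‖ ≤ 1 ∧ 1 - α < F g} := ⟨hn₂, hF₂⟩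
    calc (2:ℝ) ≤ dist g₁ g₂ := hdist
      _ ≤ _ := Metric.dist_le_diam_of_mem hSbdd hm₁ hm₂
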